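/- For the ring of cliques R_{b,q} with b ≥ 3, q ≥ 3, the vectors v₁⁽⁰⁾ = √(b+1)·(1_q ⊗ e₁) + √(b−1)·(1_q ⊗ g₁) and v₂⁽⁰⁾ = (b−1)^{3/2}·(1_q ⊗ e₁) − √(b+1)·(1_q ⊗ g₁) satisfy Â v₁⁽⁰⁾ = λ₁⁽⁰⁾ v₁⁽⁰⁾ and Â v₂⁽⁰⁾ = λ₂⁽⁰⁾ v₂⁽⁰⁾. -/

import Mathlib

open Matrix Finset

/-- Adjacency matrix of the ring of cliques `R_{b,q}`:
`A = I_q ⊗ (1_b 1_bᵀ − I_b) + C_q ⊗ e₁e₁ᵀ`, written entrywise.  Vertices are pairs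
`(i, a)` where `i : Fin q` is the block and `a : Fin b` the position within the block;
`a = 0` is the corner vertex of the block. -/
noncomputable def rocAdj (b q : ℕ) : Matrix (Fin q × Fin b) (Fin q × Fin b) ℝ :=
  Matrix.of fun p r =>
    (if p.1 = r.1 ∧ p.2 ≠ r.2 then (1 : ℝ) else 0) +
    (if ((p.1.val + 1) % q = r.1.val ∨ (r.1.val + 1) % q = p.1.val) ∧
        p.2.val = 0 ∧ r.2.val = 0 then (1 : ℝ) else 0)

/-- Degrees in `R_{b,q}`: the corner of each block has degree `b+1`, internal
vertices have degree `b−1`. -/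
noncomputable def rocDeg (b q : ℕ) (p : Fin q × Fin b) : ℝ :=
  if p.2.val = 0 then (b : ℝ) + 1 else (b : ℝ) - 1

/-- Normalized adjacency matrix `Â = D^{−1/2} A D^{−1/2}` of `R_{b,q}`. -/
noncomputable def rocAhat (b q : ℕ) : Matrix (Fin q × Fin b) (Fin q × Fin b) ℝ :=
  Matrix.diagonal (fun p => 1 / Real.sqrt (rocDeg b q p)) * rocAdj b q *
    Matrix.diagonal (fun p => 1 / Real.sqrt (rocDeg b q p))

/-- `α_k = 2 cos(2πk/q)`. -/
noncomputable def rocAlpha (q k : ℕ) : ℝ := 2 * Real.cos (2 * Real.pi * k / q)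

/-- `β_k = (1/2)(α_k √((b−1)/(b+1)) − √(b²−1) + √((b+1)/(b−1)))`. -/
noncomputable def rocBeta (b q k : ℕ) : ℝ :=
  (1 / 2) * (rocAlpha q k * Real.sqrt (((b : ℝ) - 1) / ((b : ℝ) + 1)) -
    Real.sqrt ((b : ℝ) ^ 2 - 1) + Real.sqrt (((b : ℝ) + 1) / ((b : ℝ) - 1)))

/-- `ξ₁⁽ᵏ⁾ = β_k + √(β_k² + (b−1))`. -/
noncomputable def rocXi1 (b q k : ℕ) : ℝ :=
  rocBeta b q k + Real.sqrt ((rocBeta b q k) ^ 2 + ((b : ℝ) - 1))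

/-- `ξ₂⁽ᵏ⁾ = β_k − √(β_k² + (b−1))`. -/
noncomputable def rocXi2 (b q k : ℕ) : ℝ :=
  rocBeta b q k - Real.sqrt ((rocBeta b q k) ^ 2 + ((b : ℝ) - 1))

/-- `λ₁⁽ᵏ⁾ = ξ₁⁽ᵏ⁾/√(b²−1) + 1 − 1/(b−1)`. -/
noncomputable def rocLam1 (b q k : ℕ) : ℝ :=
  rocXi1 b q k / Real.sqrt ((b : ℝ) ^ 2 - 1) + 1 - 1 / ((b : ℝ) - 1)

/-- `λ₂⁽ᵏ⁾ = ξ₂⁽ᵏ⁾/√(b²−1) + 1 − 1/(b−1)`. -/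
noncomputable def rocLam2 (b q k : ℕ) : ℝ :=
  rocXi2 b q k / Real.sqrt ((b : ℝ) ^ 2 - 1) + 1 - 1 / ((b : ℝ) - 1)



lemma sum_val_eq_zero {b : ℕ} (hb : 0 < b) (f : Fin b → ℝ) :
    ∑ a : Fin b, (if a.val = 0 then f a else 0) = f ⟨0, hb⟩ := by
  have h : ∀ a : Fin b, (a.val = 0) = (a = ⟨0, hb⟩) := by
    intro a; simp [Fin.ext_iff]
  simp_rw [h]
  simp

lemma sum_ind {b : ℕ} (hb : 0 < b) (c0 c1 : ℝ) :
    ∑ a : Fin b, (if a.val = 0 then c0 else c1) = c0 + ((b:ℝ) - 1) * c1 := by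
  have : ∀ a : Fin b, (if a.val = 0 then c0 else c1)
      = c1 + (if a.val = 0 then c0 - c1 else 0) := by
    intro a; split <;> ring
  rw [Finset.sum_congr rfl (fun a _ => this a), Finset.sum_add_distrib,
    sum_val_eq_zero hb]
  simp [Finset.card_univ, mul_comm]
  ring

lemma cycle_sum {q : ℕ} (hq : 3 ≤ q) (i : Fin q) (c : ℝ) :
    ∑ j : Fin q, (if ((i.val + 1) % q = j.val ∨ (j.val + 1) % q = i.val) then c else 0)
      = 2 * c := by
  have hq0 : 0 < q := by omega
  have hmod : ∀ x : ℕ, x < q → (x + 1) % q = if x + 1 = q then 0 else x + 1 := by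
    intro x hx
    split
    · next h => rw [h, Nat.mod_self]
    · next h => exact Nat.mod_eq_of_lt (by omega)
  set j1 : Fin q := ⟨(i.val + 1) % q, Nat.mod_lt _ hq0⟩ with hj1
  set j2 : Fin q := ⟨if i.val = 0 then q - 1 else i.val - 1, by split <;> omega⟩ with hj2
  have key : ∀ j : Fin q, ((i.val + 1) % q = j.val ∨ (j.val + 1) % q = i.val) ↔ (j = j1 ∨ j = j2) := by
    intro j
    have hi := i.isLt
    have hj := j.isLt
    rw [Fin.ext_iff, Fin.ext_iff, hj1, hj2]
    simp only [Fin.val_mk]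
    rw [hmod i.val i.isLt, hmod j.val j.isLt]
    split_ifs <;> omega
  have hne : j1 ≠ j2 := by
    have hi := i.isLt
    rw [Ne, Fin.ext_iff, hj1, hj2]
    simp only [Fin.val_mk]
    rw [hmod i.val i.isLt]
    split_ifs <;> omega
  calc ∑ j : Fin q, (if ((i.val + 1) % q = j.val ∨ (j.val + 1) % q = i.val) then c else 0)
      = ∑ j : Fin q, ((if j = j1 then c else 0) + (if j = j2 then c else 0)) := by
        refine Finset.sum_congr rfl fun j _ => ?_
        rw [if_congr (key j) rfl rfl]
        by_cases e1 : j = j1 <;> by_cases e2 : j = j2 <;> simp [e1, e2] <;> tauto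
    _ = 2 * c := by
        rw [Finset.sum_add_distrib]; simp; ring


lemma ahat_mulVec (b q : ℕ) (hb : 3 ≤ b) (hq : 3 ≤ q) (v0 v1 : ℝ) (p : Fin q × Fin b) :
    (rocAhat b q).mulVec (fun r => if r.2.val = 0 then v0 else v1) p =
      (1 / Real.sqrt (rocDeg b q p)) *
        ((v0 / Real.sqrt ((b:ℝ)+1) + ((b:ℝ)-1) * (v1 / Real.sqrt ((b:ℝ)-1)))
          - (if p.2.val = 0 then v0 / Real.sqrt ((b:ℝ)+1) else v1 / Real.sqrt ((b:ℝ)-1))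
          + (if p.2.val = 0 then 2 * (v0 / Real.sqrt ((b:ℝ)+1)) else 0)) := by
  have hb0 : 0 < b := by omega
  set w0 : ℝ := v0 / Real.sqrt ((b:ℝ)+1) with hw0
  set w1 : ℝ := v1 / Real.sqrt ((b:ℝ)-1) with hw1
  set w : Fin b → ℝ := fun a => if a.val = 0 then w0 else w1 with hw
  have hentry : ∀ r : Fin q × Fin b, rocAhat b q p r =
      (1 / Real.sqrt (rocDeg b q p)) * rocAdj b q p r * (1 / Real.sqrt (rocDeg b q r)) := by
    intro r
    simp [rocAhat, Matrix.mul_diagonal, Matrix.diagonal_mul]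
  have hsummand : ∀ j : Fin q, ∀ a : Fin b,
      rocAdj b q p (j, a) * ((1 / Real.sqrt (rocDeg b q (j, a))) * (if a.val = 0 then v0 else v1)) =
        (if p.1 = j ∧ p.2 ≠ a then (1:ℝ) else 0) * w a +
        (if ((p.1.val + 1) % q = j.val ∨ (j.val + 1) % q = p.1.val) ∧ p.2.val = 0 ∧ a.val = 0
          then (1:ℝ) else 0) * w a := by
    intro j a
    have hwa : (1 / Real.sqrt (rocDeg b q (j, a))) * (if a.val = 0 then v0 else v1) = w a := by
      by_cases h : a.val = 0 <;> simp [rocDeg, h, hw, hw0, hw1] <;> ring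
    rw [hwa]
    simp only [rocAdj, Matrix.of_apply]
    ring
  have main : ∑ r : Fin q × Fin b, rocAdj b q p r *
        ((1 / Real.sqrt (rocDeg b q r)) * (if r.2.val = 0 then v0 else v1)) =
      ((w0 + ((b:ℝ)-1) * w1) - (if p.2.val = 0 then w0 else w1))
        + (if p.2.val = 0 then 2 * w0 else 0) := by
    rw [Fintype.sum_prod_type]
    simp only [hsummand, Finset.sum_add_distrib]
    congr 1
    · -- within-block part
      have h1 : ∀ j : Fin q, ∑ a : Fin b, (if p.1 = j ∧ p.2 ≠ a then (1:ℝ) else 0) * w a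
          = if p.1 = j then ((w0 + ((b:ℝ)-1) * w1) - w p.2) else 0 := by
        intro j
        by_cases hj : p.1 = j
        · simp only [hj, true_and, if_true]
          have : ∀ a : Fin b, (if p.2 ≠ a then (1:ℝ) else 0) * w a
              = w a - (if a = p.2 then w p.2 else 0) := by
            intro a
            by_cases ha : p.2 = a
            · rw [if_neg (by simp [ha]), if_pos ha.symm, ha]; ring
            · rw [if_pos ha, if_neg (fun h => ha h.symm)]; ring
          rw [Finset.sum_congr rfl (fun a _ => this a), Finset.sum_sub_distrib]
          simp [sum_ind hb0 w0 w1, hw]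
        · simp [hj]
      rw [Finset.sum_congr rfl (fun j _ => h1 j)]
      rw [Finset.sum_ite_eq Finset.univ p.1]
      have : w p.2 = if p.2.val = 0 then w0 else w1 := by simp [hw]
      simp [this]
    · -- cycle part
      have h2 : ∀ j : Fin q, ∑ a : Fin b,
          (if ((p.1.val + 1) % q = j.val ∨ (j.val + 1) % q = p.1.val) ∧ p.2.val = 0 ∧ a.val = 0
            then (1:ℝ) else 0) * w a
          = if (((p.1.val + 1) % q = j.val ∨ (j.val + 1) % q = p.1.val) ∧ p.2.val = 0)
              then w0 else 0 := by
        intro j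
        by_cases hc : ((p.1.val + 1) % q = j.val ∨ (j.val + 1) % q = p.1.val) ∧ p.2.val = 0
        · rw [if_pos hc]
          have : ∀ a : Fin b,
              (if ((p.1.val + 1) % q = j.val ∨ (j.val + 1) % q = p.1.val) ∧ p.2.val = 0 ∧ a.val = 0
                then (1:ℝ) else 0) * w a = if a.val = 0 then w0 else 0 := by
            intro a
            by_cases ha : a.val = 0 <;> simp [ha, hc.1, hc.2, hw]
          rw [Finset.sum_congr rfl (fun a _ => this a)]
          rw [sum_val_eq_zero hb0 (fun _ => w0)]
        · rw [if_neg hc]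
          have : ∀ a : Fin b,
              (if ((p.1.val + 1) % q = j.val ∨ (j.val + 1) % q = p.1.val) ∧ p.2.val = 0 ∧ a.val = 0
                then (1:ℝ) else 0) * w a = 0 := by
            intro a
            rw [if_neg (by tauto)]; ring
          rw [Finset.sum_congr rfl (fun a _ => this a)]
          simp
      rw [Finset.sum_congr rfl (fun j _ => h2 j)]
      by_cases hx : p.2.val = 0
      · simp only [hx, and_true, if_true]
        rw [cycle_sum hq p.1 w0]
      · simp [hx]
  rw [Matrix.mulVec]
  show ∑ r : Fin q × Fin b, rocAhat b q p r * (if r.2.val = 0 then v0 else v1) = _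
  rw [Finset.sum_congr rfl (fun r _ => by rw [hentry r]; ring_nf :
    ∀ r ∈ Finset.univ, rocAhat b q p r * (if r.2.val = 0 then v0 else v1) =
      (1 / Real.sqrt (rocDeg b q p)) * (rocAdj b q p r *
        ((1 / Real.sqrt (rocDeg b q r)) * (if r.2.val = 0 then v0 else v1))))]
  rw [← Finset.mul_sum, main]

section
variable (b q : ℕ) (hb : 3 ≤ b)

lemma roc_sqrt_facts (hb : 3 ≤ b) :
    rocBeta b q 0 = (1/2) * (2 * (Real.sqrt ((b:ℝ)-1) / Real.sqrt ((b:ℝ)+1))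
      - Real.sqrt ((b:ℝ)+1) * Real.sqrt ((b:ℝ)-1)
      + Real.sqrt ((b:ℝ)+1) / Real.sqrt ((b:ℝ)-1)) := by
  have hB : (3:ℝ) ≤ (b:ℝ) := by exact_mod_cast hb
  have h0 : rocAlpha q 0 = 2 := by simp [rocAlpha]
  have h1 : Real.sqrt (((b:ℝ)-1)/((b:ℝ)+1)) = Real.sqrt ((b:ℝ)-1) / Real.sqrt ((b:ℝ)+1) :=
    Real.sqrt_div (by linarith) _
  have h2 : Real.sqrt (((b:ℝ)+1)/((b:ℝ)-1)) = Real.sqrt ((b:ℝ)+1) / Real.sqrt ((b:ℝ)-1) :=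
    Real.sqrt_div (by linarith) _
  have h3 : Real.sqrt ((b:ℝ)^2-1) = Real.sqrt ((b:ℝ)+1) * Real.sqrt ((b:ℝ)-1) := by
    rw [show (b:ℝ)^2-1 = ((b:ℝ)+1)*((b:ℝ)-1) by ring, Real.sqrt_mul (by linarith)]
  rw [rocBeta, h0, h1, h2, h3]

lemma roc_sqrt_key (hb : 3 ≤ b) :
    Real.sqrt ((rocBeta b q 0)^2 + ((b:ℝ)-1)) =
      Real.sqrt ((b:ℝ)+1) / Real.sqrt ((b:ℝ)-1) - rocBeta b q 0 := by
  have hB : (3:ℝ) ≤ (b:ℝ) := by exact_mod_cast hb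
  have hβ := roc_sqrt_facts b q hb
  set s := Real.sqrt ((b:ℝ)+1) with hsdef
  set t := Real.sqrt ((b:ℝ)-1) with htdef
  have hs : 0 < s := Real.sqrt_pos.2 (by linarith)
  have ht : 0 < t := Real.sqrt_pos.2 (by linarith)
  have s2 : s^2 = (b:ℝ)+1 := Real.sq_sqrt (by linarith)
  have t2 : t^2 = (b:ℝ)-1 := Real.sq_sqrt (by linarith)
  have hst : s^2 = t^2 + 2 := by rw [s2, t2]; ring
  rw [hβ, ← t2]
  have hpos : (0:ℝ) ≤ s/t - (1/2) * (2*(t/s) - s*t + s/t) := by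
    have he : s/t - (1/2) * (2*(t/s) - s*t + s/t) = (s*s - 2*(t*t) + s*t*(s*t))/(2*(s*t)) := by
      field_simp; ring
    rw [he]
    apply div_nonneg _ (by positivity)
    nlinarith [sq_nonneg t, ht.le]
  rw [show ((1/2) * (2*(t/s) - s*t + s/t))^2 + t^2 = (s/t - (1/2)*(2*(t/s) - s*t + s/t))^2 by
    field_simp; ring_nf; linear_combination (-4*s^2*t^2 : ℝ) * hst]
  exact Real.sqrt_sq hpos

lemma roc_lam1_zero (hb : 3 ≤ b) : rocLam1 b q 0 = 1 := by
  have hB : (3:ℝ) ≤ (b:ℝ) := by exact_mod_cast hb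
  set s := Real.sqrt ((b:ℝ)+1) with hsdef
  set t := Real.sqrt ((b:ℝ)-1) with htdef
  have hs : 0 < s := Real.sqrt_pos.2 (by linarith)
  have ht : 0 < t := Real.sqrt_pos.2 (by linarith)
  have t2 : t^2 = (b:ℝ)-1 := Real.sq_sqrt (by linarith)
  have h3 : Real.sqrt ((b:ℝ)^2-1) = s * t := by
    rw [show (b:ℝ)^2-1 = ((b:ℝ)+1)*((b:ℝ)-1) by ring, Real.sqrt_mul (by linarith)]
  have hxi : rocXi1 b q 0 = s/t := by
    rw [rocXi1, roc_sqrt_key b q hb]; ring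
  rw [rocLam1, hxi, h3, ← t2]
  field_simp
  ring

lemma roc_lam2_zero (hb : 3 ≤ b) : rocLam2 b q 0 = 2/((b:ℝ)+1) - 1/((b:ℝ)-1) := by
  have hB : (3:ℝ) ≤ (b:ℝ) := by exact_mod_cast hb
  set s := Real.sqrt ((b:ℝ)+1) with hsdef
  set t := Real.sqrt ((b:ℝ)-1) with htdef
  have hs : 0 < s := Real.sqrt_pos.2 (by linarith)
  have ht : 0 < t := Real.sqrt_pos.2 (by linarith)
  have s2 : s^2 = (b:ℝ)+1 := Real.sq_sqrt (by linarith)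
  have t2 : t^2 = (b:ℝ)-1 := Real.sq_sqrt (by linarith)
  have h3 : Real.sqrt ((b:ℝ)^2-1) = s * t := by
    rw [show (b:ℝ)^2-1 = ((b:ℝ)+1)*((b:ℝ)-1) by ring, Real.sqrt_mul (by linarith)]
  have hxi : rocXi2 b q 0 = 2*(t/s) - s*t := by
    rw [rocXi2, roc_sqrt_key b q hb, roc_sqrt_facts b q hb]; ring
  rw [rocLam2, hxi, h3, ← s2, ← t2]
  field_simp
  ring

lemma roc_rpow32 (hb : 3 ≤ b) :
    ((b:ℝ)-1) ^ ((3:ℝ)/2) = ((b:ℝ)-1) * Real.sqrt ((b:ℝ)-1) := by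
  have hB : (3:ℝ) ≤ (b:ℝ) := by exact_mod_cast hb
  rw [show (3:ℝ)/2 = 1 + 1/2 by norm_num, Real.rpow_add (by linarith), Real.rpow_one,
    ← Real.sqrt_eq_rpow]
end



/-- The (unnormalized) eigenvectors of `Â` associated with the
`k = 0` eigenvalues `λ₁⁽⁰⁾, λ₂⁽⁰⁾`:
`v₁⁽⁰⁾ = √(b+1)(1_q ⊗ e₁) + √(b−1)(1_q ⊗ g₁)` and
`v₂⁽⁰⁾ = (b−1)^{3/2}(1_q ⊗ e₁) − √(b+1)(1_q ⊗ g₁)`. -/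
theorem roc_k0_eigenpairs (b q : ℕ) (hb : 3 ≤ b) (hq : 3 ≤ q) :
    (rocAhat b q).mulVec
        (fun p : Fin q × Fin b =>
          Real.sqrt ((b : ℝ) + 1) * (if p.2.val = 0 then 1 else 0) +
          Real.sqrt ((b : ℝ) - 1) * (if p.2.val = 0 then 0 else 1)) =
      rocLam1 b q 0 •
        (fun p : Fin q × Fin b =>
          Real.sqrt ((b : ℝ) + 1) * (if p.2.val = 0 then 1 else 0) +
          Real.sqrt ((b : ℝ) - 1) * (if p.2.val = 0 then 0 else 1)) ∧
    (rocAhat b q).mulVec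
        (fun p : Fin q × Fin b =>
          ((b : ℝ) - 1) ^ ((3 : ℝ) / 2) * (if p.2.val = 0 then 1 else 0) -
          Real.sqrt ((b : ℝ) + 1) * (if p.2.val = 0 then 0 else 1)) =
      rocLam2 b q 0 •
        (fun p : Fin q × Fin b =>
          ((b : ℝ) - 1) ^ ((3 : ℝ) / 2) * (if p.2.val = 0 then 1 else 0) -
          Real.sqrt ((b : ℝ) + 1) * (if p.2.val = 0 then 0 else 1)) := by
  have hB : (3:ℝ) ≤ (b:ℝ) := by exact_mod_cast hb
  have hs : (0:ℝ) < Real.sqrt ((b:ℝ)+1) := Real.sqrt_pos.2 (by linarith)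
  have ht : (0:ℝ) < Real.sqrt ((b:ℝ)-1) := Real.sqrt_pos.2 (by linarith)
  have s2 : Real.sqrt ((b:ℝ)+1)^2 = (b:ℝ)+1 := Real.sq_sqrt (by linarith)
  have hbn1 : ((b:ℝ)-1) ≠ 0 := by linarith
  have hbn2 : ((b:ℝ)+1) ≠ 0 := by linarith
  have t2 : Real.sqrt ((b:ℝ)-1)^2 = (b:ℝ)-1 := Real.sq_sqrt (by linarith)
  constructor
  · have hv : (fun p : Fin q × Fin b =>
        Real.sqrt ((b : ℝ) + 1) * (if p.2.val = 0 then 1 else 0) +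
        Real.sqrt ((b : ℝ) - 1) * (if p.2.val = 0 then 0 else 1)) =
        (fun r : Fin q × Fin b =>
          if r.2.val = 0 then Real.sqrt ((b:ℝ)+1) else Real.sqrt ((b:ℝ)-1)) := by
      funext r; by_cases h : r.2.val = 0 <;> simp [h]
    rw [hv, roc_lam1_zero b q hb, one_smul]
    funext p
    rw [ahat_mulVec b q hb hq _ _ p]
    by_cases h : p.2.val = 0
    · simp only [rocDeg, h, if_true]
      field_simp
      linear_combination -s2
    · simp only [rocDeg, h, if_false]
      field_simp
      linear_combination -t2
  · have hv : (fun p : Fin q × Fin b =>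
        ((b : ℝ) - 1) ^ ((3 : ℝ) / 2) * (if p.2.val = 0 then 1 else 0) -
        Real.sqrt ((b : ℝ) + 1) * (if p.2.val = 0 then 0 else 1)) =
        (fun r : Fin q × Fin b =>
          if r.2.val = 0 then ((b:ℝ)-1) * Real.sqrt ((b:ℝ)-1) else -Real.sqrt ((b:ℝ)+1)) := by
      funext r; by_cases h : r.2.val = 0 <;> simp [h, roc_rpow32 b hb]
    rw [hv, roc_lam2_zero b q hb]
    funext p
    rw [ahat_mulVec b q hb hq _ _ p]
    simp only [Pi.smul_apply, smul_eq_mul]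
    by_cases h : p.2.val = 0
    · simp only [rocDeg, h, if_true]
      field_simp
      linear_combination (-((b:ℝ)^2-1) - ((b:ℝ)-3)*Real.sqrt ((b:ℝ)-1)^2) * s2 + (2*((b:ℝ)^2-1) - ((b:ℝ)-3)*((b:ℝ)+1)) * t2
    · simp only [rocDeg, h, if_false]
      field_simp
      linear_combination (((b:ℝ)^2-1)*(2-(b:ℝ)) + ((b:ℝ)-3)*Real.sqrt ((b:ℝ)-1)^2) * s2 + (((b:ℝ)^2-1)*((b:ℝ)-1) + ((b:ℝ)-3)*((b:ℝ)+1)) * t2
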